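/- Let f be the associated function of an equitable 2-partition of Q_{12} with quotient matrix [[3,9],[7,5]]. Then for every x of weight 8, f̂(x) is an integer in {−7,−6,…,9}, and for every x of weight 9 the sum Σ_{z ≼ x} f̂(z) is an odd integer. -/

import Mathlib

attribute [local instance] Classical.propDecidable
noncomputable section

/-- Vertices of the `n`-cube: binary words of length `n` over GF(2). -/
abbrev Vtx (n : ℕ) := Fin n → ZMod 2

/-- The (Hamming) weight of a word: the number of ones. -/
def wt {n : ℕ} (x : Vtx n) : ℕ := (Finset.univ.filter (fun i => x i = 1)).card

/-- The inner product `x₁y₁ + ⋯ + xₙyₙ` computed as a natural number. -/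
def ip {n : ℕ} (x y : Vtx n) : ℕ := ∑ i, (x i).val * (y i).val

/-- The character `χ_y(x) = (−1)^⟨x,y⟩`. -/
def chi {n : ℕ} (y x : Vtx n) : ℚ := (-1) ^ ip x y

/-- `leq z x` means `z ≼ x`, i.e. `zᵢ ≤ xᵢ` for all `i`. -/
def leq {n : ℕ} (x y : Vtx n) : Prop := ∀ i, (x i).val ≤ (y i).val

/-- The Fourier coefficient `f̂(y) = 2^{−n} Σ_z f(z)(−1)^⟨z,y⟩`. -/
def hat {n : ℕ} (f : Vtx n → ℚ) (y : Vtx n) : ℚ :=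
  (∑ z, f z * (-1 : ℚ) ^ ip z y) / 2 ^ n

/-- Adjacency in the `n`-cube: the words differ in exactly one coordinate. -/
def adj {n : ℕ} (x y : Vtx n) : Prop :=
  (Finset.univ.filter (fun i => x i ≠ y i)).card = 1

/-- `(C0, complement of C0)` is an equitable partition with quotient matrix
`[[a,b],[c,d]]`. -/
def IsEqPartition {n : ℕ} (C0 : Finset (Vtx n)) (a b c d : ℕ) : Prop :=
  (∀ x ∈ C0, (Finset.univ.filter (fun y => adj x y ∧ y ∈ C0)).card = a ∧
             (Finset.univ.filter (fun y => adj x y ∧ y ∉ C0)).card = b) ∧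
  (∀ x ∉ C0, (Finset.univ.filter (fun y => adj x y ∧ y ∈ C0)).card = c ∧
             (Finset.univ.filter (fun y => adj x y ∧ y ∉ C0)).card = d)

/-- The associated function of an equitable partition: `b` on `C0`, `−c` outside. -/
def assoc {n : ℕ} (C0 : Finset (Vtx n)) (b c : ℕ) : Vtx n → ℚ :=
  fun x => if x ∈ C0 then (b : ℚ) else -(c : ℚ)

/-- The face `Γ_u^v = {z + v : z ≼ u}` (of dimension `wt u`). -/
def face {n : ℕ} (u v : Vtx n) : Finset (Vtx n) :=
  Finset.univ.filter (fun x => ∃ z, leq z u ∧ x = z + v)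

open Finset

section Helpers

variable {n : ℕ}

private lemma z2 (a : ZMod 2) : a = 0 ∨ a = 1 := by revert a; decide

private lemma z2_ne (a b : ZMod 2) (h : a ≠ b) : b = a + 1 := by
  revert h; revert b; revert a; decide

private lemma v0 : (0 : ZMod 2).val = 0 := rfl
private lemma v1 : (1 : ZMod 2).val = 1 := rfl

/-- The down-set of `x`, as a finset. -/
def LL (x : Vtx n) : Finset (Vtx n) := Finset.univ.filter (fun z => leq z x)

/-- The complementary face: words vanishing on the support of `x`. -/
def TT (x : Vtx n) : Finset (Vtx n) := Finset.univ.filter (fun w => ∀ i, x i = 1 → w i = 0)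

lemma LL_eq (x : Vtx n) :
    LL x = Fintype.piFinset (fun i => if x i = 1 then (univ : Finset (ZMod 2)) else {0}) := by
  ext z
  rw [Fintype.mem_piFinset]
  rw [LL, Finset.mem_filter]
  simp only [LL, mem_filter, mem_univ, true_and, leq]
  refine forall_congr' fun i => ?_
  rcases z2 (x i) with h | h <;> rcases z2 (z i) with h' | h' <;>
    simp [h, h', v0, v1]

lemma TT_eq (x : Vtx n) :
    TT x = Fintype.piFinset (fun i => if x i = 1 then ({0} : Finset (ZMod 2)) else univ) := by
  ext w
  rw [Fintype.mem_piFinset]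
  simp only [TT, mem_filter, mem_univ, true_and]
  refine forall_congr' fun i => ?_
  rcases z2 (x i) with h | h <;> simp [h]

lemma pow_ip_eq_prod (w z : Vtx n) :
    (-1 : ℚ) ^ ip w z = ∏ i, (-1 : ℚ) ^ ((w i).val * (z i).val) := by
  rw [ip, ← Finset.prod_pow_eq_pow_sum]

lemma univ_zmod2 : (univ : Finset (ZMod 2)) = {0, 1} := by decide

lemma char_sum (x w : Vtx n) :
    ∑ z ∈ LL x, (-1 : ℚ) ^ ip w z
      = if ∀ i, x i = 1 → w i = 0 then (2 : ℚ) ^ wt x else 0 := by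
  rw [LL_eq, Finset.sum_congr rfl fun z _ => pow_ip_eq_prod w z,
    ← Finset.prod_univ_sum (fun i => if x i = 1 then (univ : Finset (ZMod 2)) else {0})
      (fun i a => (-1 : ℚ) ^ ((w i).val * a.val))]
  by_cases hw : ∀ i, x i = 1 → w i = 0
  · rw [if_pos hw]
    have key : ∀ i, (∑ a ∈ (if x i = 1 then (univ : Finset (ZMod 2)) else {0}),
        (-1 : ℚ) ^ ((w i).val * a.val)) = if x i = 1 then 2 else 1 := by
      intro i
      rcases z2 (x i) with h | h
      · rw [h, if_neg (by decide), if_neg (by decide), Finset.sum_singleton, v0]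
        norm_num
      · rw [h, if_pos rfl, if_pos rfl, univ_zmod2,
          Finset.sum_pair (by decide : (0 : ZMod 2) ≠ 1), hw i h, v0, v1]
        norm_num
    rw [Finset.prod_congr rfl fun i _ => key i, Finset.prod_ite, Finset.prod_const,
      Finset.prod_const, one_pow, mul_one, wt]
  · rw [if_neg hw]
    push_neg at hw
    obtain ⟨i, hxi, hwi⟩ := hw
    refine Finset.prod_eq_zero (Finset.mem_univ i) ?_
    have hwi1 : w i = 1 := (z2 (w i)).resolve_left hwi
    rw [if_pos hxi, univ_zmod2, Finset.sum_pair (by decide : (0 : ZMod 2) ≠ 1), hwi1, v0, v1]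
    norm_num

lemma poisson (F : Vtx n → ℚ) (x : Vtx n) :
    (∑ z ∈ LL x, hat F z) * 2 ^ n = 2 ^ wt x * ∑ w ∈ TT x, F w := by
  have h1 : ∀ z : Vtx n, hat F z * 2 ^ n = ∑ w, F w * (-1 : ℚ) ^ ip w z := by
    intro z
    rw [hat, div_mul_cancel₀]
    positivity
  calc (∑ z ∈ LL x, hat F z) * 2 ^ n
      = ∑ z ∈ LL x, ∑ w, F w * (-1 : ℚ) ^ ip w z := by
        rw [Finset.sum_mul]; exact Finset.sum_congr rfl fun z _ => h1 z
    _ = ∑ w, ∑ z ∈ LL x, F w * (-1 : ℚ) ^ ip w z := Finset.sum_comm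
    _ = ∑ w : Vtx n, F w * ∑ z ∈ LL x, (-1 : ℚ) ^ ip w z := by
        exact Finset.sum_congr rfl fun w _ => (Finset.mul_sum _ _ _).symm
    _ = ∑ w : Vtx n, (if ∀ i, x i = 1 → w i = 0 then F w * 2 ^ wt x else 0) := by
        refine Finset.sum_congr rfl fun w _ => ?_
        rw [char_sum]
        split <;> simp
    _ = ∑ w ∈ TT x, F w * 2 ^ wt x := (Finset.sum_filter _ _).symm
    _ = 2 ^ wt x * ∑ w ∈ TT x, F w := by rw [← Finset.sum_mul, mul_comm]

/-- Standard basis vector. -/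
def ee (i : Fin n) : Vtx n := fun j => if j = i then 1 else 0

lemma adj_iff (z y : Vtx n) : adj z y ↔ ∃ i, y = z + ee i := by
  constructor
  · intro hzy
    obtain ⟨i, hi⟩ := Finset.card_eq_one.mp hzy
    have hmem : ∀ j, z j ≠ y j ↔ j = i := by
      intro j
      constructor
      · intro hj
        have : j ∈ ({i} : Finset (Fin n)) := hi ▸ (mem_filter.mpr ⟨mem_univ j, hj⟩)
        simpa using this
      · rintro rfl
        have : j ∈ univ.filter (fun j => z j ≠ y j) := hi ▸ mem_singleton_self j
        exact (mem_filter.mp this).2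
    refine ⟨i, funext fun j => ?_⟩
    show y j = z j + ee i j
    show y j = z j + (if j = i then 1 else 0)
    by_cases hji : j = i
    · have h1 : z j ≠ y j := (hmem j).mpr hji
      rw [if_pos hji]
      exact z2_ne _ _ h1
    · have h1 : z j = y j := by
        by_contra hc
        exact hji ((hmem j).mp hc)
      rw [if_neg hji, add_zero, h1]
  · rintro ⟨i, rfl⟩
    show (univ.filter (fun j => z j ≠ (z + ee i) j)).card = 1
    have : univ.filter (fun j => z j ≠ (z + ee i) j) = {i} := by
      ext j
      simp only [mem_filter, mem_univ, true_and, mem_singleton, Pi.add_apply]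
      by_cases hji : j = i
      · subst hji
        rw [ee, if_pos rfl]
        constructor
        · intro _; rfl
        · intro _
          have : ∀ a : ZMod 2, a ≠ a + 1 := by decide
          exact this (z j)
      · rw [ee, if_neg hji, add_zero]
        constructor
        · intro hc; exact absurd rfl hc
        · intro hc; exact absurd hc hji
    rw [this, card_singleton]

lemma adj_comm (y z : Vtx n) : adj y z ↔ adj z y := by
  unfold adj
  rw [show (univ.filter fun i => y i ≠ z i) = (univ.filter fun i => z i ≠ y i) from
    Finset.filter_congr fun i _ => ne_comm]

lemma nbhd (z : Vtx n) :
    univ.filter (fun y => adj z y) = Finset.image (fun i => z + ee i) univ := by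
  ext y
  simp only [mem_filter, mem_univ, true_and, Finset.mem_image, adj_iff]
  exact exists_congr fun i => eq_comm

lemma ee_injOn (z : Vtx n) : ∀ i ∈ (univ : Finset (Fin n)), ∀ j ∈ (univ : Finset (Fin n)),
    z + ee i = z + ee j → i = j := by
  intro i _ j _ hij
  by_contra hne
  have h := congrFun hij i
  simp only [Pi.add_apply] at h
  have h' : ee i i = ee j i := add_left_cancel h
  rw [show ee i i = 1 from if_pos rfl, show ee j i = (0 : ZMod 2) from if_neg hne] at h'
  exact one_ne_zero h'

lemma chi_nbhd_sum (x z : Vtx n) :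
    ∑ y ∈ univ.filter (fun y => adj z y), (-1 : ℚ) ^ ip y x
      = ((n : ℚ) - 2 * wt x) * (-1 : ℚ) ^ ip z x := by
  rw [nbhd, Finset.sum_image (ee_injOn z)]
  have key : ∀ i, (-1 : ℚ) ^ ip (z + ee i) x
      = (-1 : ℚ) ^ ((x i).val) * (-1 : ℚ) ^ ip z x := by
    intro i
    rw [pow_ip_eq_prod, pow_ip_eq_prod]
    rw [← Finset.mul_prod_erase univ _ (mem_univ i),
        ← Finset.mul_prod_erase univ (fun j => (-1 : ℚ) ^ ((z j).val * (x j).val)) (mem_univ i)]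
    have h1 : ∀ j ∈ univ.erase i,
        (-1 : ℚ) ^ (((z + ee i) j).val * (x j).val) = (-1 : ℚ) ^ ((z j).val * (x j).val) := by
      intro j hj
      have hji : j ≠ i := (Finset.mem_erase.mp hj).1
      have : (z + ee i) j = z j := by
        show z j + ee i j = z j
        rw [ee, if_neg hji, add_zero]
      rw [this]
    rw [Finset.prod_congr rfl h1]
    have h2 : (-1 : ℚ) ^ (((z + ee i) i).val * (x i).val)
        = (-1 : ℚ) ^ ((x i).val) * (-1 : ℚ) ^ ((z i).val * (x i).val) := by
      have hzi : (z + ee i) i = z i + 1 := by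
        show z i + ee i i = z i + 1
        rw [ee, if_pos rfl]
      rw [hzi]
      rcases z2 (z i) with h | h <;> rcases z2 (x i) with h' | h' <;>
        rw [h, h'] <;>
        norm_num [v0, v1, show (0 : ZMod 2) + 1 = 1 by decide, show (1 : ZMod 2) + 1 = 0 by decide,
          show ((2 : ZMod 2)).val = 0 by decide]
    rw [h2, mul_assoc]
  rw [Finset.sum_congr rfl fun i _ => key i, ← Finset.sum_mul]
  congr 1
  have hiff : ∀ i, (-1 : ℚ) ^ ((x i).val) = if x i = 1 then (-1 : ℚ) else 1 := by
    intro i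
    rcases z2 (x i) with h | h <;> rw [h] <;> simp [v0, v1]
  rw [Finset.sum_congr rfl fun i _ => hiff i, Finset.sum_ite, Finset.sum_const,
    Finset.sum_const, nsmul_eq_mul, nsmul_eq_mul, wt]
  have hcards := Finset.card_filter_add_card_filter_not
    (s := (univ : Finset (Fin n))) (p := fun i => x i = 1)
  rw [Finset.card_univ, Fintype.card_fin] at hcards
  have hle : (univ.filter (fun i => x i = 1)).card ≤ n := by omega
  have hneg : ((univ.filter (fun i => ¬ x i = 1)).card : ℚ)
      = (n : ℚ) - (univ.filter (fun i => x i = 1)).card := by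
    have : (univ.filter (fun i => ¬ x i = 1)).card = n - (univ.filter (fun i => x i = 1)).card := by
      omega
    rw [this, Nat.cast_sub hle]
  rw [hneg]
  ring

lemma card_TT (x : Vtx n) : (TT x).card = 2 ^ (n - wt x) := by
  rw [TT_eq, Fintype.card_piFinset]
  have key : ∀ i, ((if x i = 1 then ({0} : Finset (ZMod 2)) else univ)).card
      = if x i = 1 then 1 else 2 := by
    intro i; split <;> simp [univ_zmod2]
  rw [Finset.prod_congr rfl fun i _ => key i, Finset.prod_ite, Finset.prod_const,
    Finset.prod_const, one_pow, one_mul]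
  congr 1
  have hcards := Finset.card_filter_add_card_filter_not
    (s := (univ : Finset (Fin n))) (p := fun i => x i = 1)
  rw [Finset.card_univ, Fintype.card_fin] at hcards
  unfold wt
  omega

lemma leq_eq_of_wt {x z : Vtx n} (hzx : leq z x) (hwt : wt x ≤ wt z) : z = x := by
  have hsub : univ.filter (fun i => z i = 1) ⊆ univ.filter (fun i => x i = 1) := by
    intro i hi
    simp only [mem_filter, mem_univ, true_and] at hi ⊢
    have hv := hzx i
    rcases z2 (x i) with h | h
    · rw [hi, h, v0, v1] at hv; omega
    · exact h
  have heq : univ.filter (fun i => x i = 1) = univ.filter (fun i => z i = 1) :=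
    (Finset.eq_of_subset_of_card_le hsub hwt).symm
  funext i
  rcases z2 (x i) with h | h
  · have hv := hzx i
    rcases z2 (z i) with h' | h'
    · rw [h, h']
    · rw [h, h', v0, v1] at hv; omega
  · have : i ∈ univ.filter (fun i => z i = 1) := heq ▸ (mem_filter.mpr ⟨mem_univ i, h⟩)
    rw [h, (mem_filter.mp this).2]

end Helpers

section Twelve

variable (C0 : Finset (Vtx 12))

lemma eigen (h : IsEqPartition C0 3 9 7 5) (z : Vtx 12) :
    ∑ y ∈ univ.filter (fun y => adj z y), assoc C0 9 7 y = -4 * assoc C0 9 7 z := by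
  have hsplit : ∑ y ∈ univ.filter (fun y => adj z y), assoc C0 9 7 y
      = 9 * ((univ.filter (fun y => adj z y ∧ y ∈ C0)).card : ℚ)
        - 7 * ((univ.filter (fun y => adj z y ∧ y ∉ C0)).card : ℚ) := by
    unfold assoc
    rw [Finset.sum_ite, Finset.sum_const, Finset.sum_const, Finset.filter_filter,
      Finset.filter_filter, nsmul_eq_mul, nsmul_eq_mul]
    push_cast
    ring
  by_cases hz : z ∈ C0
  · obtain ⟨h1, h2⟩ := h.1 z hz
    rw [hsplit, h1, h2, assoc, if_pos hz]
    norm_num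
  · obtain ⟨h1, h2⟩ := h.2 z hz
    rw [hsplit, h1, h2, assoc, if_neg hz]
    norm_num

lemma vanish (h : IsEqPartition C0 3 9 7 5) (x : Vtx 12) (hx : wt x ≠ 8) :
    hat (assoc C0 9 7) x = 0 := by
  set F := assoc C0 9 7 with hF
  have key : ((12 : ℚ) - 2 * wt x) * (∑ z, F z * (-1 : ℚ) ^ ip z x)
      = -4 * (∑ z, F z * (-1 : ℚ) ^ ip z x) := by
    have lhs : ∑ y : Vtx 12, F y * ∑ z ∈ univ.filter (fun z => adj y z), (-1 : ℚ) ^ ip z x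
        = ((12 : ℚ) - 2 * wt x) * (∑ z, F z * (-1 : ℚ) ^ ip z x) := by
      rw [Finset.mul_sum]
      refine Finset.sum_congr rfl fun y _ => ?_
      rw [chi_nbhd_sum x y]
      push_cast
      ring
    have rhs : ∑ y : Vtx 12, F y * ∑ z ∈ univ.filter (fun z => adj y z), (-1 : ℚ) ^ ip z x
        = -4 * (∑ z, F z * (-1 : ℚ) ^ ip z x) := by
      calc ∑ y : Vtx 12, F y * ∑ z ∈ univ.filter (fun z => adj y z), (-1 : ℚ) ^ ip z x
          = ∑ y : Vtx 12, ∑ z : Vtx 12, (if adj y z then F y * (-1 : ℚ) ^ ip z x else 0) := by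
            refine Finset.sum_congr rfl fun y _ => ?_
            rw [Finset.mul_sum, Finset.sum_filter]
        _ = ∑ z : Vtx 12, ∑ y : Vtx 12, (if adj y z then F y * (-1 : ℚ) ^ ip z x else 0) :=
            Finset.sum_comm
        _ = ∑ z : Vtx 12, (∑ y ∈ univ.filter (fun y => adj z y), F y) * (-1 : ℚ) ^ ip z x := by
            refine Finset.sum_congr rfl fun z _ => ?_
            rw [Finset.sum_mul, Finset.sum_filter]
            refine Finset.sum_congr rfl fun y _ => ?_
            rw [show adj z y = adj y z from propext (adj_comm z y)]
        _ = ∑ z : Vtx 12, (-4 * F z) * (-1 : ℚ) ^ ip z x := by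
            refine Finset.sum_congr rfl fun z _ => ?_
            rw [eigen C0 h z]
        _ = -4 * (∑ z, F z * (-1 : ℚ) ^ ip z x) := by
            rw [Finset.mul_sum]
            exact Finset.sum_congr rfl fun z _ => by ring
    rw [← lhs, rhs]
  have hw : (wt x : ℚ) ≠ 8 := by exact_mod_cast hx
  have hS : (∑ z, F z * (-1 : ℚ) ^ ip z x) = 0 := by
    have h16 : ((16 : ℚ) - 2 * wt x) * (∑ z, F z * (-1 : ℚ) ^ ip z x) = 0 := by
      linear_combination key
    rcases mul_eq_zero.mp h16 with hc | hc
    · exact absurd (by linarith : (wt x : ℚ) = 8) hw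
    · exact hc
  show (∑ z, F z * (-1 : ℚ) ^ ip z x) / 2 ^ 12 = 0
  rw [hS, zero_div]

lemma TT_sum (x : Vtx 12) :
    ∑ w ∈ TT x, assoc C0 9 7 w
      = 16 * (((TT x).filter (fun w => w ∈ C0)).card : ℚ) - 7 * ((TT x).card : ℚ) := by
  unfold assoc
  rw [Finset.sum_ite, Finset.sum_const, Finset.sum_const, nsmul_eq_mul, nsmul_eq_mul]
  have hcards := Finset.card_filter_add_card_filter_not
    (s := TT x) (p := fun w => w ∈ C0)
  have hle : ((TT x).filter (fun w => w ∈ C0)).card ≤ (TT x).card := Finset.card_filter_le _ _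
  have hneg : (((TT x).filter (fun w => ¬ w ∈ C0)).card : ℚ)
      = ((TT x).card : ℚ) - (((TT x).filter (fun w => w ∈ C0)).card : ℚ) := by
    have : ((TT x).filter (fun w => ¬ w ∈ C0)).card
        = (TT x).card - ((TT x).filter (fun w => w ∈ C0)).card := by omega
    rw [this, Nat.cast_sub hle]
  rw [hneg]
  push_cast
  ring

end Twelve

theorem stmt12 (C0 : Finset (Vtx 12)) (h : IsEqPartition C0 3 9 7 5) :
    (∀ x : Vtx 12, wt x = 8 →
      ∃ m : ℤ, hat (assoc C0 9 7) x = (m : ℚ) ∧ -7 ≤ m ∧ m ≤ 9) ∧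
    (∀ x : Vtx 12, wt x = 9 →
      ∃ m : ℤ, Odd m ∧
        ∑ z ∈ Finset.univ.filter (fun z => leq z x), hat (assoc C0 9 7) z
          = (m : ℚ)) := by
  constructor
  · intro x hx8
    have hcard : (TT x).card = 16 := by rw [card_TT, hx8]; norm_num
    set k := ((TT x).filter (fun w => w ∈ C0)).card with hk
    have hkle : k ≤ 16 := hcard ▸ Finset.card_filter_le _ _
    refine ⟨(k : ℤ) - 7, ?_, by omega, by omega⟩
    have hsingle : ∑ z ∈ LL x, hat (assoc C0 9 7) z = hat (assoc C0 9 7) x := by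
      refine Finset.sum_eq_single_of_mem x ?_ fun z hz hne => ?_
      · simp only [LL, mem_filter, mem_univ, true_and]
        exact fun i => le_refl _
      · refine vanish C0 h z fun hwz => ?_
        have hzx : leq z x := (mem_filter.mp hz).2
        exact hne (leq_eq_of_wt hzx (by omega))
    have hp := poisson (assoc C0 9 7) x
    rw [hsingle, TT_sum C0 x, hcard, hx8, ← hk] at hp
    have : hat (assoc C0 9 7) x = (k : ℚ) - 7 := by
      norm_num at hp
      linarith
    rw [this]
    push_cast
    ring
  · intro x hx9
    have hcard : (TT x).card = 8 := by rw [card_TT, hx9]; norm_num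
    set k := ((TT x).filter (fun w => w ∈ C0)).card with hk
    refine ⟨2 * (k : ℤ) - 7, ⟨(k : ℤ) - 4, by ring⟩, ?_⟩
    have hp := poisson (assoc C0 9 7) x
    rw [TT_sum C0 x, hcard, hx9, ← hk] at hp
    show ∑ z ∈ LL x, hat (assoc C0 9 7) z = ((2 * (k : ℤ) - 7 : ℤ) : ℚ)
    have : ∑ z ∈ LL x, hat (assoc C0 9 7) z = 2 * (k : ℚ) - 7 := by
      norm_num at hp
      linarith
    rw [this]
    push_cast
    ring
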